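/- Let ε be a polynomial of degree at most N-1 that vanishes at k distinct grid points x_1,...,x_k, and whose derivatives satisfy |ε^{(m)}(x_{c,1})| ≤ C h^{N-m} for m = 1,...,α and |ε^{(n)}(x_{c,2})| ≤ C h^{N-n} for n = 1,...,β, where α + β + k = N and all points lie in an interval of length at most C'h. Assume the associated Hermite-like interpolation problem is uniquely solvable on the normalized grid. Then there is a constant C'' (depending only on the normalized node configuration, C, C', N) such that |ε(x)| ≤ C'' h^N for all x ∈ [x_{c,1}, x_{c,2}]. -/

import Mathlib

open Polynomial

private lemma iter_deriv_comp_scale (p : Polynomial ℝ) (h : ℝ) (m : ℕ) :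
    Polynomial.derivative^[m] (p.comp (Polynomial.C h * X)) =
      Polynomial.C (h ^ m) * ((Polynomial.derivative^[m] p).comp (Polynomial.C h * X)) := by
  induction m with
  | zero => simp
  | succ m ih =>
      have hder : Polynomial.derivative (Polynomial.C h * X) = Polynomial.C h := by simp
      rw [Function.iterate_succ_apply', ih, derivative_C_mul, derivative_comp, hder,
        Function.iterate_succ_apply', pow_succ, C_mul]
      ring

theorem small_data_hermite_like_bound
    (N k α β : ℕ) (hN : 0 < N) (hsum : α + β + k = N)
    (y : Fin k → ℝ) (hy_inj : Function.Injective y)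
    (c₁ c₂ : ℝ) (hc : c₁ < c₂)
    (hbox : ∀ i, y i ∈ Set.Icc c₁ c₂ ∧ c₂ - c₁ ≤ 1)
    (huniq : ∀ q : Polynomial ℝ, q.natDegree ≤ N - 1 →
      (∀ i, q.eval (y i) = 0) →
      (∀ m ∈ Finset.Icc 1 α, (Polynomial.derivative^[m] q).eval c₁ = 0) →
      (∀ n ∈ Finset.Icc 1 β, (Polynomial.derivative^[n] q).eval c₂ = 0) → q = 0)
    (C : ℝ) (hC : 0 ≤ C) :
    ∃ C'' : ℝ, 0 ≤ C'' ∧ ∀ h : ℝ, 0 < h →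
      ∀ ε : Polynomial ℝ, ε.natDegree ≤ N - 1 →
        (∀ i, ε.eval (h * y i) = 0) →
        (∀ m ∈ Finset.Icc 1 α,
          |(Polynomial.derivative^[m] ε).eval (h * c₁)| ≤ C * h ^ (N - m)) →
        (∀ n ∈ Finset.Icc 1 β,
          |(Polynomial.derivative^[n] ε).eval (h * c₂)| ≤ C * h ^ (N - n)) →
        ∀ x ∈ Set.Icc (h * c₁) (h * c₂), |ε.eval x| ≤ C'' * h ^ N := by
  classical
  -- coefficient space and the "to polynomial" map
  let toPoly : (Fin N → ℝ) →ₗ[ℝ] Polynomial ℝ :=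
    (Polynomial.degreeLT ℝ N).subtype ∘ₗ (Polynomial.degreeLTEquiv ℝ N).symm.toLinearMap
  let D : ℕ → Polynomial ℝ →ₗ[ℝ] Polynomial ℝ := fun m => (Polynomial.derivative (R := ℝ)) ^ m
  -- the data map
  let Ψ : (Fin N → ℝ) →ₗ[ℝ] (Fin k → ℝ) × (Fin α → ℝ) × (Fin β → ℝ) :=
    LinearMap.prod
      ((LinearMap.pi fun i => Polynomial.leval (y i)).comp toPoly)
      (LinearMap.prod
        ((LinearMap.pi fun m : Fin α => (Polynomial.leval c₁).comp (D (m + 1))).comp toPoly)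
        ((LinearMap.pi fun n : Fin β => (Polynomial.leval c₂).comp (D (n + 1))).comp toPoly))
  have htoPoly_mem : ∀ a : Fin N → ℝ, toPoly a ∈ Polynomial.degreeLT ℝ N := fun a =>
    ((Polynomial.degreeLTEquiv ℝ N).symm a).2
  have htoPoly_coeff : ∀ a : Fin N → ℝ,
      Polynomial.degreeLTEquiv ℝ N ⟨toPoly a, htoPoly_mem a⟩ = a := by
    intro a
    have : (⟨toPoly a, htoPoly_mem a⟩ : Polynomial.degreeLT ℝ N) =
        (Polynomial.degreeLTEquiv ℝ N).symm a := rfl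
    rw [this, LinearEquiv.apply_symm_apply]
  -- injectivity
  have hinj : Function.Injective Ψ := by
    rw [← LinearMap.ker_eq_bot, LinearMap.ker_eq_bot']
    intro a ha
    set p := toPoly a with hp
    have hpdeg : p.natDegree ≤ N - 1 := by
      have hd : p.degree < N := Polynomial.mem_degreeLT.1 (htoPoly_mem a)
      rcases eq_or_ne p 0 with h0 | h0
      · simp [h0]
      · have := (Polynomial.natDegree_lt_iff_degree_lt h0).2 hd
        omega
    have hp0 : p = 0 := by
      apply huniq p hpdeg
      · intro i
        have := congrFun (congrArg Prod.fst ha) i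
        simpa [Ψ, Pi.prod, Polynomial.leval] using this
      · intro m hm
        simp only [Finset.mem_Icc] at hm
        have := congrFun (congrArg (fun z => z.2.1) ha) ⟨m - 1, by omega⟩
        simp only [Ψ, Function.prod, LinearMap.prod_apply, LinearMap.comp_apply, LinearMap.pi_apply,
          Prod.snd_zero, Prod.fst_zero, Pi.zero_apply, Polynomial.leval_apply, D,
          Module.End.pow_apply] at this
        have hm1 : m - 1 + 1 = m := by omega
        rwa [hm1] at this
      · intro n hn
        simp only [Finset.mem_Icc] at hn
        have := congrFun (congrArg (fun z => z.2.2) ha) ⟨n - 1, by omega⟩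
        simp only [Ψ, Function.prod, LinearMap.prod_apply, LinearMap.comp_apply, LinearMap.pi_apply,
          Prod.snd_zero, Prod.fst_zero, Pi.zero_apply, Polynomial.leval_apply, D,
          Module.End.pow_apply] at this
        have hn1 : n - 1 + 1 = n := by omega
        rwa [hn1] at this
    have : (⟨p, htoPoly_mem a⟩ : Polynomial.degreeLT ℝ N) = 0 := Subtype.ext hp0
    have := congrArg (Polynomial.degreeLTEquiv ℝ N) this
    rwa [htoPoly_coeff a, map_zero] at this
  have hdim : Module.finrank ℝ (Fin N → ℝ) =
      Module.finrank ℝ ((Fin k → ℝ) × (Fin α → ℝ) × (Fin β → ℝ)) := by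
    simp [Module.finrank_fin_fun, Module.finrank_prod]
    omega
  let e := Ψ.linearEquivOfInjective hinj hdim
  let T := LinearMap.toContinuousLinearMap (e.symm.toLinearMap)
  set K := ‖T‖ with hK
  have hK0 : 0 ≤ K := norm_nonneg _
  set M : ℝ := max (max |c₁| |c₂|) 1 with hM
  have hM1 : 1 ≤ M := le_max_right _ _
  have hM0 : 0 ≤ M := le_trans zero_le_one hM1
  refine ⟨N * M ^ N * K * C, by positivity, ?_⟩
  intro h hh ε hdeg hgrid hd1 hd2 x hx
  have hhne : h ≠ 0 := ne_of_gt hh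
  -- rescaled polynomial
  set q : Polynomial ℝ := ε.comp (Polynomial.C h * X) with hq
  have hqeval : ∀ t : ℝ, q.eval t = ε.eval (h * t) := by
    intro t; simp [hq, Polynomial.eval_comp]
  have hqderiv : ∀ m : ℕ, ∀ t : ℝ,
      (Polynomial.derivative^[m] q).eval t = h ^ m * (Polynomial.derivative^[m] ε).eval (h * t) := by
    intro m t
    rw [hq, iter_deriv_comp_scale]
    simp [Polynomial.eval_comp]
  have hqmem : q ∈ Polynomial.degreeLT ℝ N := by
    rw [Polynomial.mem_degreeLT]
    refine lt_of_le_of_lt Polynomial.degree_le_natDegree ?_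
    have : q.natDegree ≤ N - 1 := by
      rw [hq, Polynomial.natDegree_comp]
      have : (Polynomial.C h * X : Polynomial ℝ).natDegree = 1 := by
        simp [Polynomial.natDegree_C_mul_X _ hhne]
      rw [this, mul_one]; exact hdeg
    exact_mod_cast (show q.natDegree < N by omega)
  set a : Fin N → ℝ := Polynomial.degreeLTEquiv ℝ N ⟨q, hqmem⟩ with ha
  have htp : toPoly a = q := by
    have : (Polynomial.degreeLTEquiv ℝ N).symm a = ⟨q, hqmem⟩ := by
      rw [ha, LinearEquiv.symm_apply_apply]
    simp only [toPoly, LinearMap.comp_apply, LinearEquiv.coe_toLinearMap, this,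
      Submodule.subtype_apply]
  -- bound the data
  set d := Ψ a with hd
  have hd_bound : ‖d‖ ≤ C * h ^ N := by
    have hChN : 0 ≤ C * h ^ N := by positivity
    rw [hd]
    simp only [Ψ, Function.prod, LinearMap.prod_apply, LinearMap.comp_apply, LinearMap.pi_apply,
      Polynomial.leval_apply, D, Module.End.pow_apply, htp, Prod.norm_def]
    refine max_le ?_ (max_le ?_ ?_)
    · refine pi_norm_le_iff_of_nonneg hChN |>.2 fun i => ?_
      simp only [LinearMap.pi_apply, LinearMap.comp_apply, Polynomial.leval_apply,
        Module.End.pow_apply]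
      rw [Real.norm_eq_abs, hqeval, hgrid i, abs_zero]; exact hChN
    · refine pi_norm_le_iff_of_nonneg hChN |>.2 fun j => ?_
      simp only [LinearMap.pi_apply, LinearMap.comp_apply, Polynomial.leval_apply,
        Module.End.pow_apply]
      rw [Real.norm_eq_abs, hqderiv]
      have hj : (j : ℕ) + 1 ∈ Finset.Icc 1 α := Finset.mem_Icc.2 (by have := j.2; omega)
      have hb := hd1 _ hj
      have hjN : (j : ℕ) + 1 ≤ N := by have := j.2; omega
      calc |h ^ ((j : ℕ) + 1) * (Polynomial.derivative^[(j : ℕ) + 1] ε).eval (h * c₁)|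
          = h ^ ((j : ℕ) + 1) * |(Polynomial.derivative^[(j : ℕ) + 1] ε).eval (h * c₁)| := by
            rw [abs_mul, abs_of_pos (by positivity)]
        _ ≤ h ^ ((j : ℕ) + 1) * (C * h ^ (N - ((j : ℕ) + 1))) := by
            exact mul_le_mul_of_nonneg_left hb (by positivity)
        _ = C * h ^ N := by
            rw [show h ^ ((j : ℕ) + 1) * (C * h ^ (N - ((j : ℕ) + 1))) =
              C * (h ^ ((j : ℕ) + 1) * h ^ (N - ((j : ℕ) + 1))) from by ring, ← pow_add,
              show (j : ℕ) + 1 + (N - ((j : ℕ) + 1)) = N from by omega]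
    · refine pi_norm_le_iff_of_nonneg hChN |>.2 fun j => ?_
      simp only [LinearMap.pi_apply, LinearMap.comp_apply, Polynomial.leval_apply,
        Module.End.pow_apply]
      rw [Real.norm_eq_abs, hqderiv]
      have hj : (j : ℕ) + 1 ∈ Finset.Icc 1 β := Finset.mem_Icc.2 (by have := j.2; omega)
      have hb := hd2 _ hj
      have hjN : (j : ℕ) + 1 ≤ N := by have := j.2; omega
      calc |h ^ ((j : ℕ) + 1) * (Polynomial.derivative^[(j : ℕ) + 1] ε).eval (h * c₂)|
          = h ^ ((j : ℕ) + 1) * |(Polynomial.derivative^[(j : ℕ) + 1] ε).eval (h * c₂)| := by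
            rw [abs_mul, abs_of_pos (by positivity)]
        _ ≤ h ^ ((j : ℕ) + 1) * (C * h ^ (N - ((j : ℕ) + 1))) := by
            exact mul_le_mul_of_nonneg_left hb (by positivity)
        _ = C * h ^ N := by
            rw [show h ^ ((j : ℕ) + 1) * (C * h ^ (N - ((j : ℕ) + 1))) =
              C * (h ^ ((j : ℕ) + 1) * h ^ (N - ((j : ℕ) + 1))) from by ring, ← pow_add,
              show (j : ℕ) + 1 + (N - ((j : ℕ) + 1)) = N from by omega]
  -- recover a from d through the inverse
  have hae : a = e.symm d := by
    have : e a = d := by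
      rw [hd]; exact Ψ.linearEquivOfInjective_apply hinj hdim a
    rw [← this, LinearEquiv.symm_apply_apply]
  have ha_norm : ‖a‖ ≤ K * (C * h ^ N) := by
    have hTd : T d = e.symm d :=
      congrFun (LinearMap.coe_toContinuousLinearMap' (e.symm.toLinearMap)) d
    rw [hae, ← hTd]
    calc ‖T d‖ ≤ K * ‖d‖ := T.le_opNorm d
      _ ≤ K * (C * h ^ N) := mul_le_mul_of_nonneg_left hd_bound hK0
  -- evaluate
  set t : ℝ := x / h with htdef
  have hxt : h * t = x := by rw [htdef, mul_comm]; exact div_mul_cancel₀ x hhne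
  have ht : t ∈ Set.Icc c₁ c₂ := by
    obtain ⟨hx1, hx2⟩ := hx
    constructor
    · rw [htdef, le_div_iff₀ hh]; linarith [hx1]
    · rw [htdef, div_le_iff₀ hh]; linarith [hx2]
  have htM : |t| ≤ M := by
    obtain ⟨ht1, ht2⟩ := ht
    rw [abs_le]
    constructor
    · have : -M ≤ c₁ := by
        have h1 : |c₁| ≤ M := le_trans (le_max_left _ _) (le_max_left _ _)
        have := neg_abs_le c₁
        linarith
      linarith
    · have h2 : c₂ ≤ M := le_trans (le_abs_self c₂)
        (le_trans (le_max_right _ _) (le_max_left _ _))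
      linarith
  have hev : ε.eval x = q.eval t := by rw [hqeval, hxt]
  rw [hev, Polynomial.eval_eq_sum_degreeLTEquiv hqmem t]
  have hterm : ∀ i : Fin N,
      |Polynomial.degreeLTEquiv ℝ N ⟨q, hqmem⟩ i * t ^ (i : ℕ)| ≤ (K * (C * h ^ N)) * M ^ N := by
    intro i
    rw [abs_mul]
    have h1 : |Polynomial.degreeLTEquiv ℝ N ⟨q, hqmem⟩ i| ≤ K * (C * h ^ N) := by
      have := norm_le_pi_norm a i
      rw [Real.norm_eq_abs] at this
      exact le_trans (by rw [ha]) (le_trans this ha_norm)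
    have h2 : |t ^ (i : ℕ)| ≤ M ^ N := by
      rw [abs_pow]
      calc |t| ^ (i : ℕ) ≤ M ^ (i : ℕ) := pow_le_pow_left₀ (abs_nonneg t) htM _
        _ ≤ M ^ N := pow_le_pow_right₀ hM1 (le_of_lt i.2)
    exact mul_le_mul h1 h2 (abs_nonneg _) (by positivity)
  calc |∑ i : Fin N, Polynomial.degreeLTEquiv ℝ N ⟨q, hqmem⟩ i * t ^ (i : ℕ)|
      ≤ ∑ i : Fin N, |Polynomial.degreeLTEquiv ℝ N ⟨q, hqmem⟩ i * t ^ (i : ℕ)| :=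
        Finset.abs_sum_le_sum_abs _ _
    _ ≤ ∑ _i : Fin N, (K * (C * h ^ N)) * M ^ N := Finset.sum_le_sum fun i _ => hterm i
    _ = N * (K * (C * h ^ N)) * M ^ N := by
        rw [Finset.sum_const, Finset.card_univ, Fintype.card_fin]; ring
    _ = ↑N * M ^ N * K * C * h ^ N := by ring
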